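/- In Van Loan's theorem, the (1,3) block of exp(Ξt) equals H₁(t) = ∫₀ᵗ exp(A₁(t−s)) C₁ exp(A₃ s) ds + ∫₀ᵗ ∫₀ˢ exp(A₁(t−s)) B₁ exp(A₂(s−r)) B₂ exp(A₃ r) dr ds. -/

import Mathlib

open Matrix intervalIntegral MeasureTheory

section VanLoanNorm
variable {m n : Type*} [Fintype m] [Fintype n]

/-- The `L∞` operator norm on matrices, with the uniformity replaced by the product one. -/
noncomputable abbrev vlMetric : MetricSpace (Matrix m n ℝ) :=
  (Matrix.linftyOpNormedAddCommGroup (m := m) (n := n) (α := ℝ)).toMetricSpace.replaceUniformity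
    rfl

noncomputable abbrev vlNormedAddCommGroup : NormedAddCommGroup (Matrix m n ℝ) :=
  { Matrix.linftyOpNormedAddCommGroup (m := m) (n := n) (α := ℝ) with
    toMetricSpace := vlMetric
    dist_eq := (Matrix.linftyOpNormedAddCommGroup (m := m) (n := n) (α := ℝ)).dist_eq }

noncomputable abbrev vlNormedSpace : @NormedSpace ℝ (Matrix m n ℝ) _
    vlNormedAddCommGroup.toSeminormedAddCommGroup :=
  letI := vlNormedAddCommGroup (m := m) (n := n)
  { Matrix.module with
    norm_smul_le := (Matrix.linftyOpNormedSpace (m := m) (n := n) (R := ℝ) (α := ℝ)).norm_smul_le }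

noncomputable abbrev vlNormedRing [DecidableEq n] : NormedRing (Matrix n n ℝ) :=
  { Matrix.linftyOpNormedRing (n := n) (α := ℝ) with
    toMetricSpace := vlMetric
    dist_eq := (Matrix.linftyOpNormedRing (n := n) (α := ℝ)).dist_eq
    norm_mul_le := (Matrix.linftyOpNormedRing (n := n) (α := ℝ)).norm_mul_le }

noncomputable abbrev vlNormedAlgebra [DecidableEq n] : @NormedAlgebra ℝ (Matrix n n ℝ) _
    vlNormedRing.toSeminormedRing :=
  letI := vlNormedRing (n := n)
  { Matrix.instAlgebra with
    norm_smul_le := (Matrix.linftyOpNormedAlgebra (n := n) (R := ℝ) (α := ℝ)).norm_smul_le }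

end VanLoanNorm

attribute [local instance] vlNormedAddCommGroup vlNormedSpace vlNormedRing vlNormedAlgebra

set_option linter.unusedSectionVars false

namespace VanLoanAux

variable {l m n : Type*} [Fintype l] [Fintype m] [Fintype n]
  [DecidableEq l] [DecidableEq m] [DecidableEq n]

/-- Left-multiplication by a fixed matrix, as a continuous linear map. -/
noncomputable def mulL (X : Matrix l m ℝ) : Matrix m n ℝ →L[ℝ] Matrix l n ℝ :=
  LinearMap.toContinuousLinearMap
    { toFun := fun Y => X * Y
      map_add' := fun Y Z => Matrix.mul_add X Y Z
      map_smul' := fun c Y => (Matrix.mul_smul X c Y) }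

@[simp] theorem mulL_apply (X : Matrix l m ℝ) (Y : Matrix m n ℝ) : mulL (n := n) X Y = X * Y := rfl

/-- Matrix multiplication as a continuous bilinear map. -/
noncomputable def mulB : Matrix l m ℝ →L[ℝ] Matrix m n ℝ →L[ℝ] Matrix l n ℝ :=
  LinearMap.toContinuousLinearMap
    { toFun := mulL
      map_add' := fun X Y => by ext Z i j; simp [Matrix.add_mul]
      map_smul' := fun c X => by ext Z i j; simp [Matrix.smul_mul] }

@[simp] theorem mulB_apply (X : Matrix l m ℝ) (Y : Matrix m n ℝ) : mulB (l := l) (m := m) (n := n) X Y = X * Y := rfl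

theorem hasDerivAt_matMul {f : ℝ → Matrix l m ℝ} {g : ℝ → Matrix m n ℝ} {f' : Matrix l m ℝ}
    {g' : Matrix m n ℝ} {t : ℝ} (hf : HasDerivAt f f' t) (hg : HasDerivAt g g' t) :
    HasDerivAt (fun s => f s * g s) (f' * g t + f t * g') t := by
  have h1 : HasDerivAt (fun s => mulB (l := l) (m := m) (n := n) (f s)) (mulB f') t := by
    have := (ContinuousLinearMap.hasFDerivAt
      (mulB (l := l) (m := m) (n := n))).comp_hasDerivAt t hf
    simpa [Function.comp_def] using this
  simpa using h1.clm_apply hg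

theorem continuous_matMul {f : ℝ → Matrix l m ℝ} {g : ℝ → Matrix m n ℝ}
    (hf : Continuous f) (hg : Continuous g) : Continuous fun s => f s * g s := by
  have := (mulB (l := l) (m := m) (n := n)).isBoundedBilinearMap.continuous.comp
    (hf.prodMk hg)
  simpa [Function.comp_def] using this


variable {l m n : Type*} [Fintype l] [Fintype m] [Fintype n]
  [DecidableEq l] [DecidableEq m] [DecidableEq n]

/-- Entry extraction as a continuous linear map. -/
noncomputable def entryCLM (i : m) (j : n) : Matrix m n ℝ →L[ℝ] ℝ :=
  LinearMap.toContinuousLinearMap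
    { toFun := fun X => X i j
      map_add' := fun X Y => rfl
      map_smul' := fun c X => rfl }

@[simp] theorem entryCLM_apply (i : m) (j : n) (X : Matrix m n ℝ) : entryCLM i j X = X i j := rfl

theorem integral_entry {f : ℝ → Matrix m n ℝ} {a b : ℝ} (hf : Continuous f) (i : m) (j : n) :
    (∫ s in a..b, f s) i j = ∫ s in a..b, f s i j := by
  have := (entryCLM i j).intervalIntegral_comp_comm (μ := volume) (a := a) (b := b)
    (hf.intervalIntegrable a b)
  simpa using this.symm

theorem mul_integral {f : ℝ → Matrix m n ℝ} {a b : ℝ} (X : Matrix l m ℝ) (hf : Continuous f) :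
    X * (∫ s in a..b, f s) = ∫ s in a..b, X * f s := by
  have := (mulL (l := l) X).intervalIntegral_comp_comm (μ := volume) (a := a) (b := b)
    (hf.intervalIntegrable a b)
  simpa using this.symm

theorem expDeriv (A : Matrix m m ℝ) (t : ℝ) :
    HasDerivAt (fun u : ℝ => NormedSpace.exp (u • A)) (A * NormedSpace.exp (t • A)) t := by
  exact hasDerivAt_exp_smul_const' A t

theorem expCont (A : Matrix m m ℝ) : Continuous fun u : ℝ => NormedSpace.exp (u • A) :=
  continuous_iff_continuousAt.2 fun t => (expDeriv A t).continuousAt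

theorem exp_smul_add (A : Matrix m m ℝ) (a b : ℝ) :
    NormedSpace.exp ((a + b) • A) = NormedSpace.exp (a • A) * NormedSpace.exp (b • A) := by
  rw [add_smul]
  exact Matrix.exp_add_of_commute _ _ (((Commute.refl A).smul_left a).smul_right b)

theorem exp_smul_neg_mul (A : Matrix m m ℝ) (a : ℝ) :
    NormedSpace.exp (a • A) * NormedSpace.exp ((-a) • A) = 1 := by
  rw [← exp_smul_add, add_neg_cancel, zero_smul, NormedSpace.exp_zero]

theorem exp_smul_sub (A : Matrix m m ℝ) (a b : ℝ) :
    NormedSpace.exp ((a - b) • A) = NormedSpace.exp (a • A) * NormedSpace.exp ((-b) • A) := by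
  rw [← exp_smul_add]; ring_nf

theorem hasDerivAt_primitive {f : ℝ → Matrix m n ℝ} (hf : Continuous f) (t : ℝ) :
    HasDerivAt (fun u : ℝ => ∫ s in (0:ℝ)..u, f s) (f t) t :=
  intervalIntegral.integral_hasDerivAt_right (hf.intervalIntegrable 0 t)
    (hf.stronglyMeasurableAtFilter _ _) hf.continuousAt

theorem continuous_primitive' {f : ℝ → Matrix m n ℝ} (hf : Continuous f) :
    Continuous fun u : ℝ => ∫ s in (0:ℝ)..u, f s :=
  continuous_iff_continuousAt.2 fun t => (hasDerivAt_primitive hf t).continuousAt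

/-- Solution formula for the linear matrix ODE `f' = A f + g`. -/
theorem ode_solution {A : Matrix m m ℝ} {g f : ℝ → Matrix m n ℝ} (hg : Continuous g)
    (hf : ∀ u, HasDerivAt f (A * f u + g u) u) (t : ℝ) :
    f t = NormedSpace.exp (t • A) * f 0 +
      NormedSpace.exp (t • A) * ∫ s in (0:ℝ)..t, NormedSpace.exp ((-s) • A) * g s := by
  have hφ : ∀ s : ℝ, HasDerivAt (fun u => NormedSpace.exp ((-u) • A) * f u)
      (NormedSpace.exp ((-s) • A) * g s) s := by
    intro s
    have h1 : HasDerivAt (fun u : ℝ => NormedSpace.exp ((-u) • A))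
        (-(A * NormedSpace.exp ((-s) • A))) s := by
      have := (expDeriv A (-s)).scomp s (hasDerivAt_neg s)
      have h2 : ((fun u : ℝ => NormedSpace.exp (u • A)) ∘ Neg.neg) =
          fun u : ℝ => NormedSpace.exp ((-u) • A) := rfl
      rw [h2] at this
      simpa using this
    have h2 := hasDerivAt_matMul h1 (hf s)
    have hc : NormedSpace.exp ((-s) • A) * A = A * NormedSpace.exp ((-s) • A) :=
      (((Commute.refl A).smul_right (-s)).exp_right).symm.eq
    convert h2 using 1
    rw [Matrix.mul_add, ← Matrix.mul_assoc, hc, Matrix.neg_mul]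
    abel
  have hcont : Continuous fun s : ℝ => NormedSpace.exp ((-s) • A) * g s :=
    continuous_matMul ((expCont A).comp continuous_neg) hg
  have key : ∫ s in (0:ℝ)..t, NormedSpace.exp ((-s) • A) * g s =
      NormedSpace.exp ((-t) • A) * f t - NormedSpace.exp ((-(0:ℝ)) • A) * f 0 :=
    intervalIntegral.integral_eq_sub_of_hasDerivAt (fun s _ => hφ s)
      (hcont.intervalIntegrable 0 t)
  rw [key]
  simp only [neg_zero, zero_smul, NormedSpace.exp_zero, Matrix.one_mul]
  rw [Matrix.mul_sub, ← Matrix.mul_assoc, exp_smul_neg_mul, Matrix.one_mul]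
  abel

variable {p q : Type*} [Fintype p] [Fintype q] [DecidableEq p] [DecidableEq q]

noncomputable def fromBlocksCLM :
    (Matrix m p ℝ × Matrix m q ℝ × Matrix n p ℝ × Matrix n q ℝ) →L[ℝ]
      Matrix (m ⊕ n) (p ⊕ q) ℝ :=
  LinearMap.toContinuousLinearMap
    { toFun := fun x => fromBlocks x.1 x.2.1 x.2.2.1 x.2.2.2
      map_add' := by intros x y; simp [Matrix.fromBlocks_add]
      map_smul' := by intros c x; simp [Matrix.fromBlocks_smul] }

theorem hasDerivAt_fromBlocks {a : ℝ → Matrix m p ℝ} {b : ℝ → Matrix m q ℝ}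
    {c : ℝ → Matrix n p ℝ} {d : ℝ → Matrix n q ℝ} {a' : Matrix m p ℝ} {b' : Matrix m q ℝ}
    {c' : Matrix n p ℝ} {d' : Matrix n q ℝ} {t : ℝ}
    (ha : HasDerivAt a a' t) (hb : HasDerivAt b b' t) (hc : HasDerivAt c c' t)
    (hd : HasDerivAt d d' t) :
    HasDerivAt (fun u => fromBlocks (a u) (b u) (c u) (d u)) (fromBlocks a' b' c' d') t := by
  have := (fromBlocksCLM (m := m) (n := n) (p := p) (q := q)).hasFDerivAt.comp_hasDerivAt t
    ((ha.prodMk (hb.prodMk (hc.prodMk hd))))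
  simpa [Function.comp_def, fromBlocksCLM] using this

section blocks

variable {i₁ i₂ j₁ j₂ k₁ k₂ : Type*} [Fintype i₁] [Fintype i₂] [Fintype j₁] [Fintype j₂]
  [Fintype k₁] [Fintype k₂] [DecidableEq i₁] [DecidableEq i₂]

theorem mul_toBlocks₁₁ (X : Matrix (i₁ ⊕ i₂) (j₁ ⊕ j₂) ℝ) (Y : Matrix (j₁ ⊕ j₂) (k₁ ⊕ k₂) ℝ) :
    (X * Y).toBlocks₁₁ = X.toBlocks₁₁ * Y.toBlocks₁₁ + X.toBlocks₁₂ * Y.toBlocks₂₁ := by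
  rw [← fromBlocks_toBlocks X, ← fromBlocks_toBlocks Y, fromBlocks_multiply]; simp

theorem mul_toBlocks₂₁ (X : Matrix (i₁ ⊕ i₂) (j₁ ⊕ j₂) ℝ) (Y : Matrix (j₁ ⊕ j₂) (k₁ ⊕ k₂) ℝ) :
    (X * Y).toBlocks₂₁ = X.toBlocks₂₁ * Y.toBlocks₁₁ + X.toBlocks₂₂ * Y.toBlocks₂₁ := by
  rw [← fromBlocks_toBlocks X, ← fromBlocks_toBlocks Y, fromBlocks_multiply]; simp

theorem mul_toBlocks₂₂ (X : Matrix (i₁ ⊕ i₂) (j₁ ⊕ j₂) ℝ) (Y : Matrix (j₁ ⊕ j₂) (k₁ ⊕ k₂) ℝ) :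
    (X * Y).toBlocks₂₂ = X.toBlocks₂₁ * Y.toBlocks₁₂ + X.toBlocks₂₂ * Y.toBlocks₂₂ := by
  rw [← fromBlocks_toBlocks X, ← fromBlocks_toBlocks Y, fromBlocks_multiply]; simp

theorem toBlocks₁₁_zero : (0 : Matrix (i₁ ⊕ i₂) (k₁ ⊕ k₂) ℝ).toBlocks₁₁ = 0 := rfl

theorem mul_toBlocks₁₂ (X : Matrix (i₁ ⊕ i₂) (j₁ ⊕ j₂) ℝ) (Y : Matrix (j₁ ⊕ j₂) (k₁ ⊕ k₂) ℝ) :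
    (X * Y).toBlocks₁₂ = X.toBlocks₁₁ * Y.toBlocks₁₂ + X.toBlocks₁₂ * Y.toBlocks₂₂ := by
  rw [← fromBlocks_toBlocks X, ← fromBlocks_toBlocks Y, fromBlocks_multiply]; simp

theorem toBlocks₁₁_add (X Y : Matrix (i₁ ⊕ i₂) (k₁ ⊕ k₂) ℝ) :
    (X + Y).toBlocks₁₁ = X.toBlocks₁₁ + Y.toBlocks₁₁ := rfl

theorem toBlocks₁₂_one : (1 : Matrix (i₁ ⊕ i₂) (i₁ ⊕ i₂) ℝ).toBlocks₁₂ = 0 := by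
  rw [← fromBlocks_one, toBlocks_fromBlocks₁₂]

end blocks

/-- Extraction of the (1,3) corner block, as a continuous linear map. -/
noncomputable def corner13CLM {a b c d : Type*} [Fintype a] [Fintype b] [Fintype c] [Fintype d] :
    Matrix ((a ⊕ b) ⊕ (c ⊕ d)) ((a ⊕ b) ⊕ (c ⊕ d)) ℝ →L[ℝ] Matrix a c ℝ :=
  LinearMap.toContinuousLinearMap
    { toFun := fun X => X.toBlocks₁₂.toBlocks₁₁
      map_add' := fun X Y => rfl
      map_smul' := fun c X => rfl }

@[simp] theorem corner13CLM_apply {a b c d : Type*} [Fintype a] [Fintype b] [Fintype c]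
    [Fintype d] (X : Matrix ((a ⊕ b) ⊕ (c ⊕ d)) ((a ⊕ b) ⊕ (c ⊕ d)) ℝ) :
    corner13CLM X = X.toBlocks₁₂.toBlocks₁₁ := rfl

theorem of_integral {f : ℝ → Matrix m n ℝ} {a b : ℝ} (hf : Continuous f) :
    (∫ s in a..b, f s) = Matrix.of fun i j => ∫ s in a..b, f s i j := by
  ext i j
  exact integral_entry hf i j

noncomputable def toBlocks₁₁CLM : Matrix (m ⊕ n) (p ⊕ q) ℝ →L[ℝ] Matrix m p ℝ :=
  LinearMap.toContinuousLinearMap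
    { toFun := Matrix.toBlocks₁₁
      map_add' := fun X Y => rfl
      map_smul' := fun c X => rfl }

noncomputable def toBlocks₂₁CLM : Matrix (m ⊕ n) (p ⊕ q) ℝ →L[ℝ] Matrix n p ℝ :=
  LinearMap.toContinuousLinearMap
    { toFun := Matrix.toBlocks₂₁
      map_add' := fun X Y => rfl
      map_smul' := fun c X => rfl }

theorem integral_toBlocks₁₁ {f : ℝ → Matrix (m ⊕ n) (p ⊕ q) ℝ} {a b : ℝ}
    (hf : Continuous f) :
    (∫ s in a..b, f s).toBlocks₁₁ = ∫ s in a..b, (f s).toBlocks₁₁ := by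
  have := (toBlocks₁₁CLM (m := m) (n := n) (p := p) (q := q)).intervalIntegral_comp_comm
    (μ := volume) (a := a) (b := b) (hf.intervalIntegrable a b)
  exact this.symm

theorem integral_toBlocks₂₁ {f : ℝ → Matrix (m ⊕ n) (p ⊕ q) ℝ} {a b : ℝ}
    (hf : Continuous f) :
    (∫ s in a..b, f s).toBlocks₂₁ = ∫ s in a..b, (f s).toBlocks₂₁ := by
  have := (toBlocks₂₁CLM (m := m) (n := n) (p := p) (q := q)).intervalIntegral_comp_comm
    (μ := volume) (a := a) (b := b) (hf.intervalIntegrable a b)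
  exact this.symm

/-- Van Loan's formula for the exponential of a 2×2 block upper triangular matrix. -/
theorem vl2 (P : Matrix m m ℝ) (R : Matrix n n ℝ) (Q : Matrix m n ℝ) (t : ℝ) :
    NormedSpace.exp (t • fromBlocks P Q 0 R) =
      fromBlocks (NormedSpace.exp (t • P))
        (NormedSpace.exp (t • P) * ∫ s in (0:ℝ)..t,
           NormedSpace.exp ((-s) • P) * Q * NormedSpace.exp (s • R))
        0 (NormedSpace.exp (t • R)) := by
  have hWcont : Continuous fun s : ℝ =>
      NormedSpace.exp ((-s) • P) * Q * NormedSpace.exp (s • R) :=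
    continuous_matMul
      (continuous_matMul ((expCont P).comp continuous_neg) continuous_const) (expCont R)
  set M := fromBlocks P Q 0 R with hM
  set G : ℝ → Matrix (m ⊕ n) (m ⊕ n) ℝ := fun u =>
    fromBlocks (NormedSpace.exp (u • P))
      (NormedSpace.exp (u • P) * ∫ s in (0:ℝ)..u,
        NormedSpace.exp ((-s) • P) * Q * NormedSpace.exp (s • R))
      0 (NormedSpace.exp (u • R)) with hG
  have hGd : ∀ u, HasDerivAt G (M * G u + (fun _ : ℝ => (0 : Matrix (m ⊕ n) (m ⊕ n) ℝ)) u) u := by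
    intro u
    have hb : HasDerivAt (fun v => NormedSpace.exp (v • P) * ∫ s in (0:ℝ)..v,
        NormedSpace.exp ((-s) • P) * Q * NormedSpace.exp (s • R))
        (P * (NormedSpace.exp (u • P) * ∫ s in (0:ℝ)..u,
          NormedSpace.exp ((-s) • P) * Q * NormedSpace.exp (s • R)) +
         Q * NormedSpace.exp (u • R)) u := by
      have h1 := hasDerivAt_matMul (expDeriv P u) (hasDerivAt_primitive hWcont u)
      convert h1 using 1
      rw [Matrix.mul_assoc]
      congr 1
      rw [← Matrix.mul_assoc, ← Matrix.mul_assoc, exp_smul_neg_mul, Matrix.one_mul]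
    have := hasDerivAt_fromBlocks (expDeriv P u) hb (hasDerivAt_const u 0) (expDeriv R u)
    convert this using 1
    rw [add_zero, hM, hG, fromBlocks_multiply]
    simp
  have h0 : G 0 = 1 := by
    rw [hG]
    simp [intervalIntegral.integral_same, NormedSpace.exp_zero, fromBlocks_one]
  have hsol := ode_solution continuous_const hGd t
  rw [h0] at hsol
  simp only [Matrix.mul_zero, intervalIntegral.integral_zero, Matrix.mul_one, add_zero] at hsol
  rw [← hsol, hG]

end VanLoanAux

open VanLoanAux in
/-- Van Loan's theorem, (1,3) block: the (1,3) block of `exp(Ξ t)` equals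
`H₁(t) = ∫₀ᵗ exp(A₁(t−s)) C₁ exp(A₃ s) ds
       + ∫₀ᵗ ∫₀ˢ exp(A₁(t−s)) B₁ exp(A₂(s−r)) B₂ exp(A₃ r) dr ds`. -/
theorem vanLoan_H1 {n₁ n₂ n₃ n₄ : ℕ}
    (A₁ : Matrix (Fin n₁) (Fin n₁) ℝ) (A₂ : Matrix (Fin n₂) (Fin n₂) ℝ)
    (A₃ : Matrix (Fin n₃) (Fin n₃) ℝ) (A₄ : Matrix (Fin n₄) (Fin n₄) ℝ)
    (B₁ : Matrix (Fin n₁) (Fin n₂) ℝ) (B₂ : Matrix (Fin n₂) (Fin n₃) ℝ)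
    (B₃ : Matrix (Fin n₃) (Fin n₄) ℝ)
    (C₁ : Matrix (Fin n₁) (Fin n₃) ℝ) (C₂ : Matrix (Fin n₂) (Fin n₄) ℝ)
    (D₁ : Matrix (Fin n₁) (Fin n₄) ℝ) (t : ℝ) (ht : 0 ≤ t) :
    (fun i j => NormedSpace.exp (t • Matrix.fromBlocks
          (Matrix.fromBlocks A₁ B₁ 0 A₂) (Matrix.fromBlocks C₁ D₁ B₂ C₂)
          0 (Matrix.fromBlocks A₃ B₃ 0 A₄))
        (Sum.inl (Sum.inl i)) (Sum.inr (Sum.inl j))) =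
      (fun i j =>
        (∫ s in (0:ℝ)..t,
          (NormedSpace.exp ((t - s) • A₁) * C₁ * NormedSpace.exp (s • A₃)) i j) +
        (∫ s in (0:ℝ)..t,
          (NormedSpace.exp ((t - s) • A₁) * B₁ *
            (Matrix.of fun i' j' => ∫ r in (0:ℝ)..s,
              (NormedSpace.exp ((s - r) • A₂) * B₂ * NormedSpace.exp (r • A₃)) i' j')) i j) :
        Matrix (Fin n₁) (Fin n₃) ℝ) := by
  set 𝔄 := Matrix.fromBlocks A₁ B₁ 0 A₂ with h𝔄
  set 𝔅 := Matrix.fromBlocks A₃ B₃ 0 A₄ with h𝔅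
  set Q := Matrix.fromBlocks C₁ D₁ B₂ C₂ with hQ
  set Ξ := Matrix.fromBlocks 𝔄 Q 0 𝔅 with hΞ
  have hZint : Continuous fun r : ℝ =>
      NormedSpace.exp ((-r) • A₂) * B₂ * NormedSpace.exp (r • A₃) :=
    continuous_matMul
      (continuous_matMul ((expCont A₂).comp continuous_neg) continuous_const) (expCont A₃)
  set Z : ℝ → Matrix (Fin n₂) (Fin n₃) ℝ := fun u =>
    NormedSpace.exp (u • A₂) * ∫ r in (0:ℝ)..u,
      NormedSpace.exp ((-r) • A₂) * B₂ * NormedSpace.exp (r • A₃) with hZdef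
  have hZcont : Continuous Z :=
    continuous_matMul (expCont A₂) (continuous_primitive' hZint)
  set F : ℝ → Matrix (Fin n₁) (Fin n₃) ℝ := fun u =>
    ((NormedSpace.exp (u • Ξ)).toBlocks₁₂).toBlocks₁₁ with hFdef
  have hVint : Continuous fun s : ℝ =>
      NormedSpace.exp ((-s) • 𝔄) * Q * NormedSpace.exp (s • 𝔅) :=
    continuous_matMul
      (continuous_matMul ((expCont 𝔄).comp continuous_neg) continuous_const) (expCont 𝔅)
  -- sub-blocks of exponentials of the half-size matrices
  have hA21 : ∀ u : ℝ, (NormedSpace.exp (u • 𝔄)).toBlocks₂₁ = 0 := by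
    intro u; rw [h𝔄, vl2, toBlocks_fromBlocks₂₁]
  have hA22 : ∀ u : ℝ, (NormedSpace.exp (u • 𝔄)).toBlocks₂₂ = NormedSpace.exp (u • A₂) := by
    intro u; rw [h𝔄, vl2, toBlocks_fromBlocks₂₂]
  have hB11 : ∀ u : ℝ, (NormedSpace.exp (u • 𝔅)).toBlocks₁₁ = NormedSpace.exp (u • A₃) := by
    intro u; rw [h𝔅, vl2, toBlocks_fromBlocks₁₁]
  have hB21 : ∀ u : ℝ, (NormedSpace.exp (u • 𝔅)).toBlocks₂₁ = 0 := by
    intro u; rw [h𝔅, vl2, toBlocks_fromBlocks₂₁]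
  -- the integrand of the (2,1) block of V
  have hint : ∀ s : ℝ, (NormedSpace.exp ((-s) • 𝔄) * Q * NormedSpace.exp (s • 𝔅)).toBlocks₂₁
      = NormedSpace.exp ((-s) • A₂) * B₂ * NormedSpace.exp (s • A₃) := by
    intro s
    rw [mul_toBlocks₂₁, mul_toBlocks₂₁, mul_toBlocks₂₂, hA21, hA22, hB11, hB21]
    rw [hQ, toBlocks_fromBlocks₁₁, toBlocks_fromBlocks₂₁, toBlocks_fromBlocks₁₂,
      toBlocks_fromBlocks₂₂]
    simp [Matrix.zero_mul, Matrix.mul_zero]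
  -- blocks of `exp (u • Ξ)`
  have hB23 : ∀ u : ℝ, ((NormedSpace.exp (u • Ξ)).toBlocks₁₂).toBlocks₂₁ = Z u := by
    intro u
    rw [hΞ, vl2, toBlocks_fromBlocks₁₂, mul_toBlocks₂₁, hA21, hA22, Matrix.zero_mul, zero_add,
      integral_toBlocks₂₁ hVint,
      intervalIntegral.integral_congr (g := fun s : ℝ =>
        NormedSpace.exp ((-s) • A₂) * B₂ * NormedSpace.exp (s • A₃)) (fun s _ => hint s)]
  have hB33 : ∀ u : ℝ, ((NormedSpace.exp (u • Ξ)).toBlocks₂₂).toBlocks₁₁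
      = NormedSpace.exp (u • A₃) := by
    intro u; rw [hΞ, vl2, toBlocks_fromBlocks₂₂, hB11]
  have hB43 : ∀ u : ℝ, ((NormedSpace.exp (u • Ξ)).toBlocks₂₂).toBlocks₂₁ = 0 := by
    intro u; rw [hΞ, vl2, toBlocks_fromBlocks₂₂, hB21]
  -- toBlocks of Ξ
  have hΞ11 : Ξ.toBlocks₁₁ = 𝔄 := by rw [hΞ, toBlocks_fromBlocks₁₁]
  have hΞ12 : Ξ.toBlocks₁₂ = Q := by rw [hΞ, toBlocks_fromBlocks₁₂]
  have h𝔄11 : 𝔄.toBlocks₁₁ = A₁ := by rw [h𝔄, toBlocks_fromBlocks₁₁]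
  have h𝔄12 : 𝔄.toBlocks₁₂ = B₁ := by rw [h𝔄, toBlocks_fromBlocks₁₂]
  have hQ11 : Q.toBlocks₁₁ = C₁ := by rw [hQ, toBlocks_fromBlocks₁₁]
  have hQ12 : Q.toBlocks₁₂ = D₁ := by rw [hQ, toBlocks_fromBlocks₁₂]
  -- the ODE satisfied by F
  have hg : Continuous fun u : ℝ => B₁ * Z u + C₁ * NormedSpace.exp (u • A₃) :=
    (continuous_matMul continuous_const hZcont).add
      (continuous_matMul continuous_const (expCont A₃))
  have hFd : ∀ u, HasDerivAt F
      (A₁ * F u + (B₁ * Z u + C₁ * NormedSpace.exp (u • A₃))) u := by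
    intro u
    have h1 := (corner13CLM (a := Fin n₁) (b := Fin n₂) (c := Fin n₃)
      (d := Fin n₄)).hasFDerivAt.comp_hasDerivAt u (expDeriv Ξ u)
    have h2 : HasDerivAt F ((Ξ * NormedSpace.exp (u • Ξ)).toBlocks₁₂.toBlocks₁₁) u := by
      simpa [Function.comp_def, hFdef] using h1
    convert h2 using 1
    rw [mul_toBlocks₁₂, toBlocks₁₁_add, mul_toBlocks₁₁, mul_toBlocks₁₁,
      hΞ11, hΞ12, h𝔄11, h𝔄12, hQ11, hQ12, hB23, hB33, hB43, Matrix.mul_zero, add_zero]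
    have hFu : (NormedSpace.exp (u • Ξ)).toBlocks₁₂.toBlocks₁₁ = F u := rfl
    rw [hFu, add_assoc]
  have hF0 : F 0 = 0 := by
    rw [hFdef]
    simp only [zero_smul, NormedSpace.exp_zero, toBlocks₁₂_one, toBlocks₁₁_zero]
  have hsol := ode_solution hg hFd t
  rw [hF0, Matrix.mul_zero, zero_add] at hsol
  have int1 : IntervalIntegrable (fun s : ℝ =>
      NormedSpace.exp ((-s) • A₁) * (C₁ * NormedSpace.exp (s • A₃))) volume 0 t :=
    (continuous_matMul ((expCont A₁).comp continuous_neg)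
      (continuous_matMul continuous_const (expCont A₃))).intervalIntegrable 0 t
  have int2 : IntervalIntegrable (fun s : ℝ =>
      NormedSpace.exp ((-s) • A₁) * (B₁ * Z s)) volume 0 t :=
    (continuous_matMul ((expCont A₁).comp continuous_neg)
      (continuous_matMul continuous_const hZcont)).intervalIntegrable 0 t
  have hsplit : (∫ s in (0:ℝ)..t, NormedSpace.exp ((-s) • A₁) *
        (B₁ * Z s + C₁ * NormedSpace.exp (s • A₃)))
      = (∫ s in (0:ℝ)..t, NormedSpace.exp ((-s) • A₁) * (C₁ * NormedSpace.exp (s • A₃)))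
      + ∫ s in (0:ℝ)..t, NormedSpace.exp ((-s) • A₁) * (B₁ * Z s) := by
    rw [← intervalIntegral.integral_add int1 int2]
    apply intervalIntegral.integral_congr
    intro s _
    simp only [Matrix.mul_add]
    abel
  rw [hsplit, Matrix.mul_add] at hsol
  -- the inner entrywise integral is Z
  have hZof : ∀ s : ℝ, Z s = Matrix.of fun i' j' => ∫ r in (0:ℝ)..s,
      (NormedSpace.exp ((s - r) • A₂) * B₂ * NormedSpace.exp (r • A₃)) i' j' := by
    intro s
    have hmat2 : ∀ r : ℝ, NormedSpace.exp (s • A₂) *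
        (NormedSpace.exp ((-r) • A₂) * B₂ * NormedSpace.exp (r • A₃))
        = NormedSpace.exp ((s - r) • A₂) * B₂ * NormedSpace.exp (r • A₃) := by
      intro r; rw [exp_smul_sub]; simp only [Matrix.mul_assoc]
    rw [show Z s = NormedSpace.exp (s • A₂) * ∫ r in (0:ℝ)..s,
      NormedSpace.exp ((-r) • A₂) * B₂ * NormedSpace.exp (r • A₃) from rfl]
    have hcont3 : Continuous fun r : ℝ =>
        NormedSpace.exp ((s - r) • A₂) * B₂ * NormedSpace.exp (r • A₃) :=
      continuous_matMul (continuous_matMul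
        ((expCont A₂).comp (continuous_const.sub continuous_id)) continuous_const)
        (expCont A₃)
    rw [mul_integral _ hZint,
      intervalIntegral.integral_congr (g := fun r : ℝ =>
        NormedSpace.exp ((s - r) • A₂) * B₂ * NormedSpace.exp (r • A₃))
        (fun r _ => hmat2 r),
      of_integral hcont3]
  have contC0 : Continuous fun s : ℝ =>
      NormedSpace.exp ((-s) • A₁) * (C₁ * NormedSpace.exp (s • A₃)) :=
    continuous_matMul ((expCont A₁).comp continuous_neg)
      (continuous_matMul continuous_const (expCont A₃))
  have contB0 : Continuous fun s : ℝ =>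
      NormedSpace.exp ((-s) • A₁) * (B₁ * Z s) :=
    continuous_matMul ((expCont A₁).comp continuous_neg)
      (continuous_matMul continuous_const hZcont)
  have hmatC : ∀ s : ℝ, NormedSpace.exp (t • A₁) *
      (NormedSpace.exp ((-s) • A₁) * (C₁ * NormedSpace.exp (s • A₃)))
      = NormedSpace.exp ((t - s) • A₁) * C₁ * NormedSpace.exp (s • A₃) := by
    intro s; rw [exp_smul_sub]; simp only [Matrix.mul_assoc]
  have hmatB : ∀ s : ℝ, NormedSpace.exp (t • A₁) *
      (NormedSpace.exp ((-s) • A₁) * (B₁ * Z s))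
      = NormedSpace.exp ((t - s) • A₁) * B₁ * (Matrix.of fun i' j' => ∫ r in (0:ℝ)..s,
        (NormedSpace.exp ((s - r) • A₂) * B₂ * NormedSpace.exp (r • A₃)) i' j') := by
    intro s; rw [exp_smul_sub, ← hZof s]; simp only [Matrix.mul_assoc]
  funext i j
  show NormedSpace.exp (t • Ξ) (Sum.inl (Sum.inl i)) (Sum.inr (Sum.inl j)) = _
  have hentry : NormedSpace.exp (t • Ξ) (Sum.inl (Sum.inl i)) (Sum.inr (Sum.inl j))
      = F t i j := rfl
  rw [hentry, hsol, Matrix.add_apply]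
  congr 1
  · rw [mul_integral _ contC0,
      integral_entry (continuous_matMul continuous_const contC0) i j]
    exact intervalIntegral.integral_congr fun s _ =>
      congrArg (fun M : Matrix (Fin n₁) (Fin n₃) ℝ => M i j) (hmatC s)
  · rw [mul_integral _ contB0,
      integral_entry (continuous_matMul continuous_const contB0) i j]
    exact intervalIntegral.integral_congr fun s _ =>
      congrArg (fun M : Matrix (Fin n₁) (Fin n₃) ℝ => M i j) (hmatB s)
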